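/- arXiv:2102.11332 — 2 statements merged into one kernel-verified Lean document; each statement's English description precedes it below -/
import Mathlib

section
/- Let n be a positive integer, let φ be an entire function, and suppose there exist constants C > 0 and R_0 > 0 such that: (i) |φ(z) − e^{z^n}| ≤ C/|z| for all z with |z| ≥ R_0 and |arg z| < π/n, and (ii) |φ(z)| ≤ C/|z| for all z with |z| ≥ R_0 and π/n < arg z < 2π − π/n. For 1 ≤ j ≤ n define φ_j(z) = φ(e^{−2πij/n} z), let a_1, ..., a_n be entire functions each satisfying log|a_j(z)| = o(|z|^n) as |z| → ∞, and set f(z) = ∑_{j=1}^n φ_j(z) a_j(z) e^{−z^n}. Then f is entire, and for each j_0 ∈ {1, ..., n}, f(z) − a_{j_0}(z) → 0 as z → ∞ along the ray γ_{j_0} = {r e^{2πi j_0/n} : r > 0}. -/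
open Real Filter Complex Asymptotics

lemma arg_mod (r θ : ℝ) (hr : 0 < r) :
    ∃ m : ℤ, Complex.arg ((r:ℂ) * Complex.exp ((θ:ℂ) * Complex.I)) = θ + 2*π*m := by
  set w : ℂ := (r:ℂ) * Complex.exp ((θ:ℂ) * Complex.I) with hwdef
  have habs : ‖w‖ = r := by
    simp [hwdef, Complex.norm_exp, abs_of_pos hr]
  have h0 := Complex.norm_mul_exp_arg_mul_I w
  rw [habs] at h0
  have hr0 : (r:ℂ) ≠ 0 := by exact_mod_cast hr.ne'
  have hexp : Complex.exp ((w.arg : ℂ) * Complex.I) = Complex.exp ((θ:ℂ) * Complex.I) :=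
    mul_left_cancel₀ hr0 (by rw [h0])
  obtain ⟨m, hm⟩ := Complex.exp_eq_exp_iff_exists_int.mp hexp
  refine ⟨m, ?_⟩
  have : ((w.arg : ℂ)) = ((θ + 2*π*m : ℝ) : ℂ) := by
    have hI : ((w.arg : ℂ)) * Complex.I = ((θ + 2*π*m : ℝ) : ℂ) * Complex.I := by
      rw [hm]; push_cast; ring
    exact mul_right_cancel₀ Complex.I_ne_zero hI
  exact_mod_cast this

lemma arg_big (n : ℕ) (hn : 0 < n) (d : ℤ) (hd : ¬ (n:ℤ) ∣ d) (r : ℝ) (hr : 0 < r) :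
    π / n < |Complex.arg ((r:ℂ) * Complex.exp (((2*π*d/n : ℝ):ℂ) * Complex.I))| := by
  obtain ⟨m, hm⟩ := arg_mod r (2*π*d/n) hr
  by_contra h
  push_neg at h
  have hn0 : (n:ℝ) ≠ 0 := Nat.cast_ne_zero.mpr hn.ne'
  have hA : Complex.arg ((r:ℂ) * Complex.exp (((2*π*d/n : ℝ):ℂ) * Complex.I))
      = 2*π*((d + m*n : ℤ) : ℝ)/n := by
    rw [hm]; push_cast; field_simp
  rw [hA] at h
  have hx : |((d + m*n : ℤ) : ℝ)| < 1 := by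
    rw [abs_div, abs_mul, abs_of_pos Real.two_pi_pos, abs_of_pos (by positivity : (0:ℝ) < (n:ℝ))] at h
    rw [div_le_div_iff₀ (by positivity) (by positivity)] at h
    have hpn : 0 < π * (n:ℝ) := by positivity
    nlinarith [hpn]
  have hz : (d + m*n : ℤ) = 0 := by
    have : |(d + m*n : ℤ)| < 1 := by exact_mod_cast hx
    exact Int.abs_lt_one_iff.mp this
  exact hd ⟨-m, by linarith [hz]⟩

theorem stmt_13 (n : ℕ) (hn : 0 < n) (φ : ℂ → ℂ) (hφ : Differentiable ℂ φ)
    (C R₀ : ℝ) (hC : 0 < C) (hR₀ : 0 < R₀)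
    (h1 : ∀ z : ℂ, R₀ ≤ ‖z‖ → |Complex.arg z| < π / n →
      ‖φ z - Complex.exp (z ^ n)‖ ≤ C / ‖z‖)
    (h2 : ∀ z : ℂ, R₀ ≤ ‖z‖ → π / n < |Complex.arg z| →
      ‖φ z‖ ≤ C / ‖z‖)
    (a : Fin n → ℂ → ℂ) (ha : ∀ j, Differentiable ℂ (a j))
    (hao : ∀ j : Fin n,
      (fun z : ℂ => Real.log (‖a j z‖)) =o[Filter.comap (fun z : ℂ => ‖z‖) Filter.atTop]
        (fun z : ℂ => ‖z‖ ^ n))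
    (f : ℂ → ℂ)
    (hf : f = fun z => ∑ j : Fin n,
      φ (Complex.exp (-(2 * π * (j.1 + 1) / n) * Complex.I) * z) * a j z *
        Complex.exp (-z ^ n)) :
    Differentiable ℂ f ∧
      ∀ j₀ : Fin n,
        Tendsto (fun r : ℝ =>
            f ((r : ℂ) * Complex.exp ((2 * π * (j₀.1 + 1) / n) * Complex.I)) -
              a j₀ ((r : ℂ) * Complex.exp ((2 * π * (j₀.1 + 1) / n) * Complex.I)))
          atTop (nhds 0) := by
  have hnR : (0:ℝ) < n := by exact_mod_cast hn
  have hnC : (n:ℂ) ≠ 0 := by exact_mod_cast hn.ne'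
  constructor
  · rw [hf]
    apply Differentiable.fun_sum
    intro j _
    exact ((hφ.comp ((differentiable_const _).mul differentiable_id)).mul (ha j)).mul
      (Complex.differentiable_exp.comp (differentiable_pow n).neg)
  · intro j₀
    obtain ⟨Z, hZdef⟩ : ∃ Z : ℝ → ℂ, Z = fun r : ℝ =>
        (r:ℂ) * Complex.exp ((2 * π * (j₀.1 + 1) / n) * Complex.I) := ⟨_, rfl⟩
    have hZr : ∀ r : ℝ, ((r:ℂ) * Complex.exp ((2 * π * ((j₀.1 : ℂ) + 1) / n) * Complex.I)) = Z r := by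
      intro r; rw [hZdef]
    simp only [hZr]
    -- basic identities
    have habsZ : ∀ r : ℝ, 0 ≤ r → ‖Z r‖ = r := by
      intro r hr
      rw [hZdef]
      simp only
      have h' : (2 * π * ((j₀.1 : ℂ) + 1) / n) * Complex.I
          = ((2 * π * ((j₀.1 : ℝ) + 1) / n : ℝ) : ℂ) * Complex.I := by push_cast; ring
      rw [h', norm_mul, Complex.norm_real, Real.norm_eq_abs, _root_.abs_of_nonneg hr, Complex.norm_exp]
      simp
    have hZn : ∀ r : ℝ, (Z r) ^ n = ((r:ℂ)) ^ n := by
      intro r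
      rw [hZdef]
      simp only
      rw [mul_pow, ← Complex.exp_nat_mul]
      have : ((n:ℂ)) * ((2 * π * ((j₀.1:ℂ) + 1) / n) * Complex.I)
          = (((j₀.1 : ℤ) + 1 : ℤ) : ℂ) * (2 * π * Complex.I) := by
        push_cast; field_simp
      rw [this, Complex.exp_int_mul_two_pi_mul_I, mul_one]
    have hW : ∀ (j : Fin n) (r : ℝ),
        Complex.exp (-(2 * π * ((j.1:ℂ) + 1) / n) * Complex.I) * Z r
          = (r:ℂ) * Complex.exp (((2*π*(((j₀.1:ℤ) - (j.1:ℤ) : ℤ):ℝ)/n : ℝ):ℂ) * Complex.I) := by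
      intro j r
      rw [hZdef]
      simp only
      rw [mul_comm (Complex.exp _) _, mul_assoc, ← Complex.exp_add]
      congr 2
      push_cast
      field_simp
      ring
    have hWj₀ : ∀ r : ℝ, Complex.exp (-(2 * π * ((j₀.1:ℂ) + 1) / n) * Complex.I) * Z r = (r:ℂ) := by
      intro r
      rw [hW j₀ r]
      simp
    have habsexp : ∀ r : ℝ, ‖Complex.exp (-(Z r) ^ n)‖ = Real.exp (-(r^n)) := by
      intro r
      rw [hZn]
      rw [show (-(r:ℂ)^n) = ((-(r^n) : ℝ):ℂ) by push_cast; ring]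
      rw [Complex.norm_exp, Complex.ofReal_re]
    -- the key pointwise bound
    have key : ∀ r : ℝ, max R₀ 1 ≤ r →
        ‖f (Z r) - a j₀ (Z r)‖ ≤ ∑ j : Fin n, C / r * ‖a j (Z r)‖ * Real.exp (-(r^n)) := by
      intro r hr
      have hr1 : (1:ℝ) ≤ r := le_trans (le_max_right _ _) hr
      have hrR : R₀ ≤ r := le_trans (le_max_left _ _) hr
      have hr0 : 0 < r := lt_of_lt_of_le one_pos hr1
      rw [hf]
      simp only
      have hsplit : (∑ j : Fin n, φ (Complex.exp (-(2 * π * ((j.1:ℂ) + 1) / n) * Complex.I) * Z r)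
            * a j (Z r) * Complex.exp (-(Z r) ^ n)) - a j₀ (Z r)
          = ∑ j : Fin n, (φ (Complex.exp (-(2 * π * ((j.1:ℂ) + 1) / n) * Complex.I) * Z r)
            * a j (Z r) * Complex.exp (-(Z r) ^ n) - if j = j₀ then a j₀ (Z r) else 0) := by
        rw [Finset.sum_sub_distrib, Finset.sum_ite_eq' Finset.univ j₀ (fun _ => a j₀ (Z r))]
        simp
      rw [hsplit]
      refine (norm_sum_le _ _).trans (Finset.sum_le_sum ?_)
      intro j _
      by_cases hj : j = j₀
      · subst hj
        rw [if_pos rfl]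
        have hE : Complex.exp ((Z r)^n) * Complex.exp (-(Z r)^n) = 1 := by
          rw [← Complex.exp_add]; simp
        have hrw : φ (Complex.exp (-(2 * π * ((j.1:ℂ) + 1) / n) * Complex.I) * Z r)
              * a j (Z r) * Complex.exp (-(Z r) ^ n) - a j (Z r)
            = (φ ((r:ℂ)) - Complex.exp ((Z r)^n)) * a j (Z r) * Complex.exp (-(Z r) ^ n) := by
          rw [hWj₀ r]
          linear_combination (a j (Z r)) * hE
        rw [hrw]
        rw [norm_mul, norm_mul, habsexp r]
        have harg : Complex.arg ((r:ℂ)) = 0 := Complex.arg_ofReal_of_nonneg hr0.le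
        have habsr : ‖((r:ℂ))‖ = r := by rw [Complex.norm_real, Real.norm_eq_abs, abs_of_pos hr0]
        have hb := h1 ((r:ℂ)) (by rw [habsr]; exact hrR) (by rw [harg]; simp; positivity)
        rw [habsr] at hb
        have : Complex.exp ((Z r)^n) = Complex.exp (((r:ℂ))^n) := by rw [hZn]
        rw [this]
        gcongr
      · rw [if_neg hj, sub_zero]
        set d : ℤ := (j₀.1 : ℤ) - (j.1 : ℤ) with hd
        have hnd : ¬ (n:ℤ) ∣ d := by
          intro hdvd
          have hne : d ≠ 0 := by
            simp only [hd, sub_ne_zero]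
            exact_mod_cast fun h => hj (Fin.ext (by exact_mod_cast h.symm))
          have h1' : 0 < |d| := abs_pos.mpr hne
          have h2' := Int.le_of_dvd h1' ((dvd_abs _ _).mpr hdvd)
          have hb1 : (j.1 : ℤ) < n := by exact_mod_cast j.isLt
          have hb2 : (j₀.1 : ℤ) < n := by exact_mod_cast j₀.isLt
          have hb3 : (0:ℤ) ≤ (j.1 : ℤ) := by positivity
          have hb4 : (0:ℤ) ≤ (j₀.1 : ℤ) := by positivity
          have habslt : |d| < (n:ℤ) := by
            rw [hd, abs_lt]; omega
          exact absurd h2' (not_le.mpr habslt)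
        have hw := hW j r
        rw [norm_mul, norm_mul, habsexp r, hw]
        have habsw : ‖(r:ℂ) * Complex.exp (((2*π*((d:ℤ):ℝ)/n : ℝ):ℂ) * Complex.I)‖ = r := by
          rw [norm_mul, Complex.norm_real, Real.norm_eq_abs, abs_of_pos hr0, Complex.norm_exp]
          simp
        have hb := h2 _ (by rw [habsw]; exact hrR) (arg_big n hn d hnd r hr0)
        rw [habsw] at hb
        gcongr
    -- convergence of the bound
    have hexp0 : Tendsto (fun r : ℝ => C * Real.exp (-(r^n/2))) atTop (nhds 0) := by
      have htop : Tendsto (fun r : ℝ => r^n/2) atTop atTop :=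
        (tendsto_pow_atTop hn.ne').atTop_div_const two_pos
      have := (Real.tendsto_exp_neg_atTop_nhds_zero.comp htop).const_mul C
      simpa using this
    have hZto : Tendsto Z atTop (comap (fun z : ℂ => ‖z‖) atTop) := by
      rw [tendsto_comap_iff]
      have heq : ((fun z : ℂ => ‖z‖) ∘ Z) =ᶠ[atTop] id := by
        filter_upwards [eventually_ge_atTop (0:ℝ)] with r hr
        simp [Function.comp, habsZ r hr]
      exact Tendsto.congr' heq.symm tendsto_id
    have hsum : Tendsto (fun r : ℝ => ∑ j : Fin n, C / r * ‖a j (Z r)‖ * Real.exp (-(r^n)))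
        atTop (nhds 0) := by
      have h0 : (0:ℝ) = ∑ _j : Fin n, (0:ℝ) := by simp
      rw [h0]
      apply tendsto_finset_sum
      intro j _
      have hlo := (hao j).comp_tendsto hZto
      have hev := hlo.def one_half_pos
      apply squeeze_zero' (g := fun r : ℝ => C * Real.exp (-(r^n/2)))
      · filter_upwards [eventually_ge_atTop (1:ℝ)] with r hr
        have hr0 : 0 < r := lt_of_lt_of_le one_pos hr
        positivity
      · filter_upwards [hev, eventually_ge_atTop (1:ℝ)] with r hr hr1
        have hr0 : 0 < r := lt_of_lt_of_le one_pos hr1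
        simp only [Function.comp] at hr
        rw [habsZ r hr0.le] at hr
        have hrn : |r ^ n| = r ^ n := abs_of_nonneg (by positivity)
        rw [Real.norm_eq_abs, Real.norm_eq_abs, hrn] at hr
        have hlog : Real.log (‖a j (Z r)‖) ≤ r^n/2 := by
          calc Real.log (‖a j (Z r)‖) ≤ |Real.log (‖a j (Z r)‖)| := le_abs_self _
          _ ≤ 1/2 * r^n := hr
          _ = r^n/2 := by ring
        have haexp : ‖a j (Z r)‖ ≤ Real.exp (r^n/2) := by
          rcases eq_or_lt_of_le (norm_nonneg (a j (Z r))) with h | h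
          · rw [← h]; positivity
          · exact (Real.log_le_iff_le_exp h).mp hlog
        calc C / r * ‖a j (Z r)‖ * Real.exp (-(r^n))
            ≤ C / r * Real.exp (r^n/2) * Real.exp (-(r^n)) := by gcongr
          _ = C / r * Real.exp (-(r^n/2)) := by rw [mul_assoc, ← Real.exp_add]; ring_nf
          _ ≤ C * Real.exp (-(r^n/2)) := by
              gcongr
              exact div_le_self hC.le hr1
      · exact hexp0
    rw [tendsto_zero_iff_norm_tendsto_zero]
    apply squeeze_zero' (g := fun r : ℝ => ∑ j : Fin n, C / r * ‖a j (Z r)‖ * Real.exp (-(r^n)))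
    · filter_upwards with r using norm_nonneg _
    · filter_upwards [eventually_ge_atTop (max R₀ 1)] with r hr using key r hr
    · exact hsum
end

section
/- Let n be a positive integer, d_n = ∫_0^∞ t e^{−t^n} dt, and let Γ be the contour as in Lemma le-2 (two rays at angles ±π/n). For z ∉ Γ with |z| = R, let Γ_1 be the portion of Γ with |w| ≤ R/2 and Γ_3 the portion with |w| ≥ 2R. Then |(1/(2πi)) ∫_{Γ_1} w e^{w^n} / (z(w − z)) dw| ≤ (2/(π R²)) d_n and |(1/(2πi)) ∫_{Γ_3} w e^{w^n} / (z(w − z)) dw| ≤ (1/(π R²)) d_n. -/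
open Real MeasureTheory Complex

lemma aux_integrable (n : ℕ) (hn : 0 < n) :
    IntegrableOn (fun t : ℝ => t * Real.exp (-t ^ n)) (Set.Ioi 0) := by
  have h := integrableOn_rpow_mul_exp_neg_rpow (p := (n:ℝ)) (s := 1) (by norm_num)
    (by exact_mod_cast hn)
  apply h.congr_fun ?_ measurableSet_Ioi
  intro t ht
  simp only []
  rw [Real.rpow_one, Real.rpow_natCast t n]

lemma bound_piece (f : ℝ → ℂ) (s : Set ℝ) (hs : MeasurableSet s) (hsub : s ⊆ Set.Ioi (0:ℝ))
    (n : ℕ) (hn : 0 < n) (c : ℝ) (hc : 0 ≤ c)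
    (hbound : ∀ t ∈ s, ‖f t‖ ≤ c * (t * Real.exp (-t^n))) :
    ‖∫ t in s, f t‖ ≤ c * ∫ t in Set.Ioi (0:ℝ), t * Real.exp (-t^n) := by
  have hint := aux_integrable n hn
  have hint_s : IntegrableOn (fun t => t * Real.exp (-t^n)) s := hint.mono_set hsub
  calc ‖∫ t in s, f t‖ ≤ ∫ t in s, c * (t * Real.exp (-t^n)) := by
        apply norm_integral_le_of_norm_le (hint_s.const_mul c)
        exact (ae_restrict_iff' hs).2 (.of_forall hbound)
    _ = c * ∫ t in s, t * Real.exp (-t^n) := integral_const_mul ..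
    _ ≤ c * ∫ t in Set.Ioi 0, t * Real.exp (-t^n) := by
        apply mul_le_mul_of_nonneg_left _ hc
        apply setIntegral_mono_set hint ?_ (HasSubset.Subset.eventuallyLE hsub)
        filter_upwards [ae_restrict_mem measurableSet_Ioi] with x hx
        have : (0:ℝ) < x := hx
        positivity

theorem stmt_15 (n : ℕ) (hn : 0 < n)
    (d : ℝ) (hd : d = ∫ t in Set.Ioi (0:ℝ), t * Real.exp (-t ^ n))
    (z : ℂ) (R : ℝ) (hzR : ‖z‖ = R)
    (hz : ∀ t : ℝ, 0 ≤ t →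
      z ≠ (t : ℂ) * Complex.exp ((π / n : ℝ) * Complex.I) ∧
      z ≠ (t : ℂ) * Complex.exp (-(π / n : ℝ) * Complex.I))
    (F G : ℝ → ℂ)
    (hF : F = fun (t : ℝ) => ((t : ℂ) * Complex.exp ((π / n : ℝ) * Complex.I)) *
        Complex.exp (((t : ℂ) * Complex.exp ((π / n : ℝ) * Complex.I)) ^ n) /
        (z * ((t : ℂ) * Complex.exp ((π / n : ℝ) * Complex.I) - z)) *
        Complex.exp ((π / n : ℝ) * Complex.I))
    (hG : G = fun (t : ℝ) => ((t : ℂ) * Complex.exp (-(π / n : ℝ) * Complex.I)) *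
        Complex.exp (((t : ℂ) * Complex.exp (-(π / n : ℝ) * Complex.I)) ^ n) /
        (z * ((t : ℂ) * Complex.exp (-(π / n : ℝ) * Complex.I) - z)) *
        Complex.exp (-(π / n : ℝ) * Complex.I)) :
    ‖(1 / (2 * (π : ℂ) * Complex.I)) *
        ((∫ t in Set.Ioc (0:ℝ) (R / 2), F t) - ∫ t in Set.Ioc (0:ℝ) (R / 2), G t)‖ ≤
      2 / (π * R ^ 2) * d ∧
    ‖(1 / (2 * (π : ℂ) * Complex.I)) *
        ((∫ t in Set.Ici (2 * R), F t) - ∫ t in Set.Ici (2 * R), G t)‖ ≤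
      1 / (π * R ^ 2) * d := by
  have hz0 : z ≠ 0 := by
    intro h
    have := (hz 0 le_rfl).1
    simp [h] at this
  have hR : 0 < R := by
    rw [← hzR]
    exact norm_pos_iff.2 hz0
  -- key: exp(±π/n * I)^n = -1
  have hnc : (n:ℂ) ≠ 0 := Nat.cast_ne_zero.2 hn.ne'
  -- the two direction unit vectors
  set u₁ : ℂ := Complex.exp (((π / n : ℝ):ℂ) * Complex.I) with hu₁
  set u₂ : ℂ := Complex.exp (-((π / n : ℝ):ℂ) * Complex.I) with hu₂
  have habs₁ : ‖u₁‖ = 1 := Complex.norm_exp_ofReal_mul_I _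
  have habs₂ : ‖u₂‖ = 1 := by
    rw [hu₂, ← Complex.ofReal_neg]
    exact Complex.norm_exp_ofReal_mul_I _
  have hpow₁ : u₁ ^ n = -1 := by
    rw [hu₁, ← Complex.exp_nat_mul]
    rw [show (n:ℂ) * (((π / n : ℝ):ℂ) * Complex.I) = (π:ℂ) * Complex.I by
      push_cast; field_simp]
    exact Complex.exp_pi_mul_I
  have hpow₂ : u₂ ^ n = -1 := by
    rw [hu₂, ← Complex.exp_nat_mul]
    rw [show (n:ℂ) * (-((π / n : ℝ):ℂ) * Complex.I) = -((π:ℂ) * Complex.I) by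
      push_cast; field_simp]
    rw [Complex.exp_neg, Complex.exp_pi_mul_I]
    norm_num
  -- norm formula
  have hnorm : ∀ u : ℂ, ‖u‖ = 1 → u ^ n = -1 → ∀ t : ℝ, 0 ≤ t →
      ‖((t:ℂ) * u) * Complex.exp (((t:ℂ) * u) ^ n) / (z * ((t:ℂ) * u - z)) * u‖
        = t * Real.exp (-t^n) / (R * ‖(t:ℂ) * u - z‖) := by
    intro u habs hpow t ht
    have hw : ((t:ℂ) * u) ^ n = ((-t^n : ℝ):ℂ) := by
      rw [mul_pow, hpow]; push_cast; ring
    rw [hw]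
    simp only [norm_mul, norm_div, Complex.norm_exp_ofReal, habs, Complex.norm_real,
      Real.norm_eq_abs, _root_.abs_of_nonneg ht, hzR]
    ring
  -- pointwise bounds and piece bounds
  have hlow : ∀ u : ℂ, ‖u‖ = 1 → ∀ t : ℝ, 0 ≤ t →
      ‖(t:ℂ) * u - z‖ ≥ |t - R| := by
    intro u habs t ht
    have h1 : ‖(t:ℂ) * u‖ = t := by
      rw [norm_mul, habs, Complex.norm_real, Real.norm_eq_abs, _root_.abs_of_nonneg ht, mul_one]
    have h2 : t - R ≤ ‖(t:ℂ) * u - z‖ := by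
      have := norm_sub_norm_le ((t:ℂ) * u) z
      simpa [h1, hzR, habs, _root_.abs_of_nonneg ht] using this
    have h3 : R - t ≤ ‖(t:ℂ) * u - z‖ := by
      have := norm_sub_norm_le z ((t:ℂ) * u)
      rw [norm_sub_rev] at this
      simpa [h1, hzR, habs, _root_.abs_of_nonneg ht] using this
    rcases le_total t R with h | h
    · rwa [abs_sub_comm, _root_.abs_of_nonneg (by linarith)]
    · rwa [_root_.abs_of_nonneg (by linarith)]
  have hb1 : ∀ u : ℂ, ‖u‖ = 1 → u ^ n = -1 → ∀ t ∈ Set.Ioc (0:ℝ) (R/2),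
      ‖((t:ℂ) * u) * Complex.exp (((t:ℂ) * u) ^ n) / (z * ((t:ℂ) * u - z)) * u‖
        ≤ 2/R^2 * (t * Real.exp (-t^n)) := by
    intro u habs hpow t ht
    rw [hnorm u habs hpow t ht.1.le]
    have hlb : R/2 ≤ ‖(t:ℂ) * u - z‖ := by
      have := hlow u habs t ht.1.le
      have : |t - R| ≤ ‖(t:ℂ) * u - z‖ := this
      rw [abs_sub_comm, _root_.abs_of_nonneg (by linarith [ht.2])] at this
      linarith [ht.2]
    have he : 0 ≤ t * Real.exp (-t^n) := mul_nonneg ht.1.le (Real.exp_pos _).le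
    calc t * Real.exp (-t^n) / (R * ‖(t:ℂ) * u - z‖)
        ≤ t * Real.exp (-t^n) / (R * (R/2)) := by
          apply div_le_div_of_nonneg_left he (by positivity)
          have := hR
          nlinarith [hlb]
      _ = 2/R^2 * (t * Real.exp (-t^n)) := by field_simp
  have hb3 : ∀ u : ℂ, ‖u‖ = 1 → u ^ n = -1 → ∀ t ∈ Set.Ici (2*R),
      ‖((t:ℂ) * u) * Complex.exp (((t:ℂ) * u) ^ n) / (z * ((t:ℂ) * u - z)) * u‖
        ≤ 1/R^2 * (t * Real.exp (-t^n)) := by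
    intro u habs hpow t ht
    have ht' : (0:ℝ) ≤ t := by
      have : 2*R ≤ t := ht
      linarith
    rw [hnorm u habs hpow t ht']
    have hlb : R ≤ ‖(t:ℂ) * u - z‖ := by
      have h := hlow u habs t ht'
      have h : |t - R| ≤ ‖(t:ℂ) * u - z‖ := h
      rw [_root_.abs_of_nonneg (by have : 2*R ≤ t := ht; linarith)] at h
      have : 2*R ≤ t := ht
      linarith
    have he : 0 ≤ t * Real.exp (-t^n) := mul_nonneg ht' (Real.exp_pos _).le
    calc t * Real.exp (-t^n) / (R * ‖(t:ℂ) * u - z‖)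
        ≤ t * Real.exp (-t^n) / (R * R) := by
          apply div_le_div_of_nonneg_left he (by positivity)
          nlinarith [hlb]
      _ = 1/R^2 * (t * Real.exp (-t^n)) := by rw [one_div, ← div_eq_inv_mul, pow_two]
  -- integral bounds
  have hsub1 : Set.Ioc (0:ℝ) (R/2) ⊆ Set.Ioi 0 := Set.Ioc_subset_Ioi_self
  have hsub3 : Set.Ici (2*R) ⊆ Set.Ioi (0:ℝ) := fun x hx => by
    have : 2*R ≤ x := hx
    exact Set.mem_Ioi.2 (by linarith)
  have hdnn : 0 ≤ d := by
    rw [hd]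
    apply setIntegral_nonneg measurableSet_Ioi
    intro x hx
    have : (0:ℝ) < x := hx
    positivity
  have habsI : ‖1 / (2 * (π : ℂ) * Complex.I)‖ = 1/(2*π) := by
    rw [norm_div, norm_one, norm_mul, norm_mul, Complex.norm_I, Complex.norm_two,
      Complex.norm_real, Real.norm_eq_abs, _root_.abs_of_nonneg Real.pi_pos.le, mul_one]
  have key : ∀ (s : Set ℝ), MeasurableSet s → s ⊆ Set.Ioi 0 → ∀ c : ℝ, 0 ≤ c →
      (∀ t ∈ s, ‖F t‖ ≤ c * (t * Real.exp (-t^n))) →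
      (∀ t ∈ s, ‖G t‖ ≤ c * (t * Real.exp (-t^n))) →
      ‖(1 / (2 * (π : ℂ) * Complex.I)) *
        ((∫ t in s, F t) - ∫ t in s, G t)‖ ≤ 1/π * c * d := by
    intro s hs hsub c hc hFb hGb
    have hA : ‖∫ t in s, F t‖ ≤ c * d := by
      rw [hd]
      exact bound_piece F s hs hsub n hn c hc (fun t ht => hFb t ht)
    have hB : ‖∫ t in s, G t‖ ≤ c * d := by
      rw [hd]
      exact bound_piece G s hs hsub n hn c hc (fun t ht => hGb t ht)
    rw [norm_mul, habsI]
    calc 1/(2*π) * ‖(∫ t in s, F t) - ∫ t in s, G t‖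
        ≤ 1/(2*π) * (c * d + c * d) := by
          apply mul_le_mul_of_nonneg_left _ (by positivity)
          calc ‖(∫ t in s, F t) - ∫ t in s, G t‖
              ≤ ‖∫ t in s, F t‖ + ‖∫ t in s, G t‖ := by
                exact norm_sub_le _ _
            _ ≤ c * d + c * d := add_le_add hA hB
      _ = 1/π * c * d := by field_simp [Real.pi_ne_zero]; ring
  have hFb1 : ∀ t ∈ Set.Ioc (0:ℝ) (R/2), ‖F t‖ ≤ 2/R^2 * (t * Real.exp (-t^n)) := by
    intro t ht; rw [hF]; exact hb1 u₁ habs₁ hpow₁ t ht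
  have hGb1 : ∀ t ∈ Set.Ioc (0:ℝ) (R/2), ‖G t‖ ≤ 2/R^2 * (t * Real.exp (-t^n)) := by
    intro t ht; rw [hG]; exact hb1 u₂ habs₂ hpow₂ t ht
  have hFb3 : ∀ t ∈ Set.Ici (2*R), ‖F t‖ ≤ 1/R^2 * (t * Real.exp (-t^n)) := by
    intro t ht; rw [hF]; exact hb3 u₁ habs₁ hpow₁ t ht
  have hGb3 : ∀ t ∈ Set.Ici (2*R), ‖G t‖ ≤ 1/R^2 * (t * Real.exp (-t^n)) := by
    intro t ht; rw [hG]; exact hb3 u₂ habs₂ hpow₂ t ht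
  constructor
  · have := key (Set.Ioc 0 (R/2)) measurableSet_Ioc hsub1 (2/R^2) (by positivity) hFb1 hGb1
    calc ‖_‖ ≤ 1/π * (2/R^2) * d := this
      _ = 2 / (π * R^2) * d := by field_simp
  · have := key (Set.Ici (2*R)) measurableSet_Ici hsub3 (1/R^2) (by positivity) hFb3 hGb3
    calc ‖_‖ ≤ 1/π * (1/R^2) * d := this
      _ = 1 / (π * R^2) * d := by field_simp
end
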